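/- The graph of lines of the narrow projective rectangle L_2^k is isomorphic to the bilinear forms graph H_2(2,k), whose vertices are the 2×k matrices over F_2 with two matrices adjacent iff their difference has rank 1. -/

import Mathlib

open scoped Classical

/-- The ordinary line of the projective rectangle `L_2^k` indexed by `(g,h) ∈ 𝔽₂ᵏ × 𝔽₂ᵏ`:
the set `{a_g, b_{g+h}, c_h}`, where the ordinary ground set is encoded as
`Fin 3 × (Fin k → ZMod 2)` (first coordinate 0 for `A`, 1 for `B`, 2 for `C`). -/
def L2kLine (k : ℕ) (gh : (Fin k → ZMod 2) × (Fin k → ZMod 2)) :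
    Set (Fin 3 × (Fin k → ZMod 2)) :=
  {(0, gh.1), (1, gh.1 + gh.2), (2, gh.2)}

/-- The graph of lines of `L_2^k`: vertices are the ordinary lines, two adjacent iff they
share a point. -/
def L2kGraph (k : ℕ) : SimpleGraph ((Fin k → ZMod 2) × (Fin k → ZMod 2)) where
  Adj x y := x ≠ y ∧ (L2kLine k x ∩ L2kLine k y).Nonempty
  symm := by
    constructor
    rintro a b ⟨h, p, hp1, hp2⟩
    exact ⟨h.symm, p, hp2, hp1⟩
  loopless := ⟨fun a ha => ha.1 rfl⟩

/-- The bilinear forms graph `H_q(2,k)` over a field `F` (with `q = |F|`): vertices are the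
`2 × k` matrices over `F`, two adjacent iff their difference has rank 1. -/
def bilinFormsGraph (F : Type*) [Field F] (k : ℕ) : SimpleGraph (Matrix (Fin 2) (Fin k) F) where
  Adj M N := M ≠ N ∧ (M - N).rank = 1
  symm := by
    constructor
    rintro M N ⟨h, hr⟩
    refine ⟨h.symm, ?_⟩
    rw [show N - M = -(M - N) by abel]
    have hneg : (-(M - N)).rank = (M - N).rank := by
      unfold Matrix.rank
      rw [show (-(M - N)).mulVecLin = -((M - N).mulVecLin) by
            ext v; simp [Matrix.neg_mulVec], LinearMap.range_neg]
    rw [hneg]; exact hr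
  loopless := ⟨fun M hM => hM.1 rfl⟩


private lemma rank_eq_finrank_span_rows {F : Type*} [Field F] {k : ℕ}
    (M : Matrix (Fin 2) (Fin k) F) :
    M.rank = Module.finrank F (Submodule.span F {M 0, M 1}) := by
  have hr : Set.range M = {M 0, M 1} := by
    ext x; show (∃ i, M i = x) ↔ _; simp [Fin.exists_fin_two, eq_comm]
  rw [← Matrix.rank_transpose, Matrix.rank, Matrix.range_mulVecLin, Matrix.col_transpose]
  exact congrArg (fun s => Module.finrank F (Submodule.span F s)) hr

private lemma finrank_span_pair_zmod2 {k : ℕ} (a b : Fin k → ZMod 2) :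
    Module.finrank (ZMod 2) (Submodule.span (ZMod 2) ({a, b} : Set (Fin k → ZMod 2))) = 1 ↔
      ¬(a = 0 ∧ b = 0) ∧ (a = 0 ∨ b = 0 ∨ a = b) := by
  constructor
  · intro h
    constructor
    · rintro ⟨rfl, rfl⟩
      rw [Set.pair_eq_singleton, Submodule.span_zero_singleton] at h
      simp at h
    · by_contra hc
      push_neg at hc
      obtain ⟨ha, hb, hab⟩ := hc
      have hli : LinearIndependent (ZMod 2) ![a, b] := by
        rw [LinearIndependent.pair_iff]
        intro s t hst
        fin_cases s <;> fin_cases t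
        · exact ⟨rfl, rfl⟩
        · exact absurd (by simpa using (show (0:ZMod 2) • a + (1:ZMod 2) • b = 0 from hst)) hb
        · exact absurd (by simpa using (show (1:ZMod 2) • a + (0:ZMod 2) • b = 0 from hst)) ha
        · refine absurd ?_ hab
          have h2 : a + b = 0 := by simpa using (show (1:ZMod 2) • a + (1:ZMod 2) • b = 0 from hst)
          have : a = -b := by rwa [add_eq_zero_iff_eq_neg] at h2
          funext i; have := congrFun this i; simpa [CharTwo.neg_eq] using this
      have h2 := finrank_span_eq_card hli
      rw [show Set.range ![a,b] = {a, b} by ext x; simp [Fin.exists_fin_two]; tauto] at h2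
      rw [h2] at h
      simp at h
  · rintro ⟨hne, h | h | h⟩
    · subst h
      have hb : b ≠ 0 := fun hb => hne ⟨rfl, hb⟩
      rw [Submodule.span_insert_zero]
      exact finrank_span_singleton hb
    · subst h
      have ha : a ≠ 0 := fun ha => hne ⟨ha, rfl⟩
      rw [Set.pair_comm, Submodule.span_insert_zero]
      exact finrank_span_singleton ha
    · subst h
      have ha : a ≠ 0 := fun ha => hne ⟨ha, ha⟩
      rw [Set.pair_eq_singleton]
      exact finrank_span_singleton ha

private lemma L2k_inter_iff {k : ℕ} (x y : (Fin k → ZMod 2) × (Fin k → ZMod 2)) :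
    (L2kLine k x ∩ L2kLine k y).Nonempty ↔
      (x.1 = y.1 ∨ x.1 + x.2 = y.1 + y.2 ∨ x.2 = y.2) := by
  constructor
  · rintro ⟨p, hp1, hp2⟩
    simp only [L2kLine, Set.mem_insert_iff, Set.mem_singleton_iff] at hp1 hp2
    rcases hp1 with rfl|rfl|rfl <;> rcases hp2 with h|h|h <;>
      simp_all [Prod.ext_iff, Fin.ext_iff]
  · rintro (h|h|h)
    · exact ⟨(0, x.1), by simp [L2kLine], by simp [L2kLine, h]⟩
    · exact ⟨(1, x.1 + x.2), by simp [L2kLine], by simp [L2kLine, h]⟩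
    · exact ⟨(2, x.2), by simp [L2kLine], by simp [L2kLine, h]⟩

/-- The graph of lines of `L_2^k` is isomorphic to the bilinear forms graph
`H_2(2,k)`. -/
theorem stmt15 (k : ℕ) :
    Nonempty (L2kGraph k ≃g bilinFormsGraph (ZMod 2) k) := by
  let e : ((Fin k → ZMod 2) × (Fin k → ZMod 2)) ≃ Matrix (Fin 2) (Fin k) (ZMod 2) :=
    { toFun := fun x => Matrix.of ![x.1, x.2]
      invFun := fun M => (M 0, M 1)
      left_inv := fun x => by ext <;> simp
      right_inv := fun M => by
        ext i j
        fin_cases i <;> simp }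
  refine ⟨⟨e, ?_⟩⟩
  intro x y
  show (e x ≠ e y ∧ (e x - e y).rank = 1) ↔ _
  have hrow0 : (e x - e y) 0 = x.1 - y.1 := by
    funext j; simp [e, Matrix.sub_apply]
  have hrow1 : (e x - e y) 1 = x.2 - y.2 := by
    funext j; simp [e, Matrix.sub_apply]
  rw [rank_eq_finrank_span_rows, hrow0, hrow1, finrank_span_pair_zmod2]
  have hA : x.1 - y.1 = 0 ↔ x.1 = y.1 := sub_eq_zero
  have hB : x.2 - y.2 = 0 ↔ x.2 = y.2 := sub_eq_zero
  have hC : x.1 - y.1 = x.2 - y.2 ↔ x.1 + x.2 = y.1 + y.2 := by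
    rw [funext_iff, funext_iff]
    apply forall_congr'
    intro i
    simp only [Pi.sub_apply, Pi.add_apply]
    revert i
    intro i
    generalize x.1 i = a; generalize y.1 i = b; generalize x.2 i = c; generalize y.2 i = d
    revert a b c d; decide
  have hne : e x ≠ e y ↔ x ≠ y := (Equiv.injective e).ne_iff
  have hxy : x ≠ y ↔ ¬(x.1 = y.1 ∧ x.2 = y.2) := by
    rw [Ne, Prod.ext_iff]
  rw [hA, hB, hC, hne]
  show _ ↔ (x ≠ y ∧ (L2kLine k x ∩ L2kLine k y).Nonempty)
  rw [L2k_inter_iff, hxy]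
  constructor
  · rintro ⟨h1, h2, h3⟩
    exact ⟨h1, h3.imp id Or.symm⟩
  · rintro ⟨h1, h2⟩
    exact ⟨h1, h1, h2.imp id Or.symm⟩
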